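/- For all f, g ∈ H and all s ∈ K \ {0}, t ∈ K, the element s⁴·g + t⁴ lies in H and a(f,g) ≡ a(f, s⁴·g + t⁴) (mod K²). -/

import Mathlib

/-- The set `K² = {x² : x ∈ K}` of squares of `K`. -/
def sqSet (K : Type*) [Field K] : Set K := {x | ∃ y : K, y ^ 2 = x}

/-- `K` is two-dimensional as a vector space over its subfield `K²`:
there is some `g ∉ K²`, and for every such `g` the pair `(1, g)` spans `K`
over `K²`. -/
def TwoDimOverSquares (K : Type*) [Field K] : Prop :=
  (∃ g : K, g ∉ sqSet K) ∧
    ∀ g : K, g ∉ sqSet K → ∀ x : K, ∃ a b : K, x = a ^ 2 + b ^ 2 * g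

/-- The quantity `a(f,g) = (f₁²·f₃² + f₂⁴)·g / (f₃⁴·g² + f₁⁴)`, where
`f = f₀⁴ + f₁⁴·g + f₂⁴·g² + f₃⁴·g³` is the expansion of `f` with respect to `g`
in the basis `{1, g, g², g³}` of `K` over `K⁴`. -/
noncomputable def aOf {K : Type*} [Field K] (g f₁ f₂ f₃ : K) : K :=
  ((f₁ ^ 2 * f₃ ^ 2 + f₂ ^ 4) * g) / (f₃ ^ 4 * g ^ 2 + f₁ ^ 4)

/-- **Affine invariance**: for `f, g ∈ H`, `s ≠ 0` and `t ∈ K`, one has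
`s⁴·g + t⁴ ∈ H` and `a(f,g) ≡ a(f, s⁴·g + t⁴) (mod K²)`. -/
theorem a_affine (K : Type*) [Field K] [CharP K 2] (hdim : TwoDimOverSquares K)
    (f g : K) (hf : f ∉ sqSet K) (hg : g ∉ sqSet K)
    (s t : K) (hs : s ≠ 0)
    (p₀ p₁ p₂ p₃ : K) (hp : f = p₀ ^ 4 + p₁ ^ 4 * g + p₂ ^ 4 * g ^ 2 + p₃ ^ 4 * g ^ 3)
    (q₀ q₁ q₂ q₃ : K)
    (hq : f = q₀ ^ 4 + q₁ ^ 4 * (s ^ 4 * g + t ^ 4) + q₂ ^ 4 * (s ^ 4 * g + t ^ 4) ^ 2 +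
      q₃ ^ 4 * (s ^ 4 * g + t ^ 4) ^ 3) :
    (s ^ 4 * g + t ^ 4) ∉ sqSet K ∧
      aOf g p₁ p₂ p₃ + aOf (s ^ 4 * g + t ^ 4) q₁ q₂ q₃ ∈ sqSet K := by
  have h2 : (2 : K) = 0 := by exact_mod_cast (CharP.cast_eq_zero K 2)
  have hsqinj : ∀ a b : K, a ^ 2 = b ^ 2 → a = b := by
    intro a b h
    have h0 : (a - b) ^ 2 = 0 := by linear_combination h + (b ^ 2 - a * b) * h2
    have h1 : a - b = 0 := by
      have := pow_eq_zero_iff (two_ne_zero) |>.mp h0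
      exact this
    exact sub_eq_zero.mp h1
  have hg' : (s ^ 4 * g + t ^ 4) ∉ sqSet K := by
    rintro ⟨y, hy⟩
    apply hg
    refine ⟨(y + t ^ 2) / s ^ 2, ?_⟩
    field_simp
    linear_combination hy + (t ^ 4 + y * t ^ 2) * h2
  have hind : ∀ A B A' B' : K, A ^ 2 + B ^ 2 * g = A' ^ 2 + B' ^ 2 * g → A = A' ∧ B = B' := by
    intro A B A' B' h
    by_cases hBB : B = B'
    · subst hBB
      exact ⟨hsqinj _ _ (by linear_combination h), rfl⟩
    · exfalso
      apply hg
      have hBB0 : B + B' ≠ 0 := by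
        intro h0
        exact hBB (hsqinj _ _ (by linear_combination (B - B') * h0))
      refine ⟨(A + A') / (B + B'), ?_⟩
      field_simp
      linear_combination h + (A * A' + A' ^ 2 - g * B ^ 2 - g * B * B') * h2
  have hX : (p₀ ^ 2 + p₂ ^ 2 * g) ^ 2 + (p₁ ^ 2 + p₃ ^ 2 * g) ^ 2 * g
      = (q₀ ^ 2 + q₁ ^ 2 * t ^ 2 + q₂ ^ 2 * t ^ 4 + q₃ ^ 2 * t ^ 6
          + s ^ 4 * (q₂ ^ 2 + q₃ ^ 2 * t ^ 2) * g) ^ 2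
        + (s ^ 2 * (q₁ ^ 2 + q₃ ^ 2 * t ^ 4) + s ^ 6 * q₃ ^ 2 * g) ^ 2 * g := by
    linear_combination hp - hq + ((-1) * q₀ ^ 4 + p₀ ^ 4 + (-1) * t ^ 2 * q₀ ^ 2 * q₁ ^ 2 + (-1) * t ^ 4 * q₁ ^ 4 + (-1) * t ^ 4 * q₀ ^ 2 * q₂ ^ 2 + (-1) * t ^ 6 * q₁ ^ 2 * q₂ ^ 2 + (-1) * t ^ 6 * q₀ ^ 2 * q₃ ^ 2 + (-1) * t ^ 8 * q₂ ^ 4 + (-1) * t ^ 8 * q₁ ^ 2 * q₃ ^ 2 + (-1) * t ^ 10 * q₂ ^ 2 * q₃ ^ 2 + (-1) * t ^ 12 * q₃ ^ 4 + g * p₁ ^ 4 + g * p₀ ^ 2 * p₂ ^ 2 + (-1) * g * s ^ 4 * q₁ ^ 4 + (-1) * g * s ^ 4 * q₀ ^ 2 * q₂ ^ 2 + (-1) * g * s ^ 4 * t ^ 2 * q₁ ^ 2 * q₂ ^ 2 + (-1) * g * s ^ 4 * t ^ 2 * q₀ ^ 2 * q₃ ^ 2 + (-2) * g * s ^ 4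 * t ^ 4 * q₂ ^ 4 + (-2) * g * s ^ 4 * t ^ 4 * q₁ ^ 2 * q₃ ^ 2 + (-2) * g * s ^ 4 * t ^ 6 * q₂ ^ 2 * q₃ ^ 2 + (-3) * g * s ^ 4 * t ^ 8 * q₃ ^ 4 + g ^ 2 * p₂ ^ 4 + g ^ 2 * p₁ ^ 2 * p₃ ^ 2 + (-1) * g ^ 2 * s ^ 8 * q₂ ^ 4 + (-1) * g ^ 2 * s ^ 8 * q₁ ^ 2 * q₃ ^ 2 + (-1) * g ^ 2 * s ^ 8 * t ^ 2 * q₂ ^ 2 * q₃ ^ 2 + (-3) * g ^ 2 * s ^ 8 * t ^ 4 * q₃ ^ 4 + g ^ 3 * p₃ ^ 4 + (-1) * g ^ 3 * s ^ 12 * q₃ ^ 4) * h2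
  obtain ⟨hA, hB⟩ := hind _ _ _ _ hX
  have hBstep : p₁ ^ 2 + p₃ ^ 2 * g
      = (s * (q₁ + q₃ * t ^ 2)) ^ 2 + (s ^ 3 * q₃) ^ 2 * g := by
    linear_combination hB + ((-1) * s ^ 2 * t ^ 2 * q₁ * q₃) * h2
  obtain ⟨hp1, hp3⟩ := hind _ _ _ _ hBstep
  have hAstep : p₀ ^ 2 + p₂ ^ 2 * g
      = (q₀ + q₁ * t + q₂ * t ^ 2 + q₃ * t ^ 3) ^ 2 + (s ^ 2 * (q₂ + q₃ * t)) ^ 2 * g := by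
    linear_combination hA + ((-1) * t * q₀ * q₁ + (-1) * t ^ 2 * q₀ * q₂ + (-1) * t ^ 3 * q₁ * q₂ + (-1) * t ^ 3 * q₀ * q₃ + (-1) * t ^ 4 * q₁ * q₃ + (-1) * t ^ 5 * q₂ * q₃ + (-1) * g * s ^ 4 * t * q₂ * q₃) * h2
  obtain ⟨hp0, hp2⟩ := hind _ _ _ _ hAstep
  have hE : q₃ ^ 2 * (s ^ 4 * g + t ^ 4) + q₁ ^ 2 ≠ 0 := by
    intro h0
    by_cases hq3 : q₃ = 0
    · have hq1 : q₁ = 0 := by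
        apply hsqinj q₁ 0
        linear_combination h0 - (s ^ 4 * g + t ^ 4) * (q₃ * hq3)
      apply hf
      refine ⟨q₀ ^ 2 + q₂ ^ 2 * (s ^ 4 * g + t ^ 4), ?_⟩
      rw [hq, hq1, hq3]
      ring_nf
      linear_combination (q₀ ^ 2 * q₂ ^ 2 * (s ^ 4 * g + t ^ 4)) * h2
    · apply hg'
      refine ⟨q₁ / q₃, ?_⟩
      field_simp
      linear_combination h0 - (q₃ ^ 2 * (s ^ 4 * g + t ^ 4)) * h2
  subst hp1 hp2 hp3
  refine ⟨hg', (q₁ * q₃ + q₂ ^ 2) * t ^ 2 / (q₃ ^ 2 * (s ^ 4 * g + t ^ 4) + q₁ ^ 2), ?_⟩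
  have hden1 : (s ^ 3 * q₃) ^ 4 * g ^ 2 + (s * (q₁ + q₃ * t ^ 2)) ^ 4
      = s ^ 4 * (q₃ ^ 2 * (s ^ 4 * g + t ^ 4) + q₁ ^ 2) ^ 2 := by
    linear_combination (2 * s ^ 4 * t ^ 2 * q₁ ^ 3 * q₃ + 2 * s ^ 4 * t ^ 4 * q₁ ^ 2 * q₃ ^ 2 + 2 * s ^ 4 * t ^ 6 * q₁ * q₃ ^ 3 + (-1) * g * s ^ 8 * q₁ ^ 2 * q₃ ^ 2 + (-1) * g * s ^ 8 * t ^ 4 * q₃ ^ 4) * h2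
  have hnum1 : ((s * (q₁ + q₃ * t ^ 2)) ^ 2 * (s ^ 3 * q₃) ^ 2 + (s ^ 2 * (q₂ + q₃ * t)) ^ 4) * g
      = s ^ 4 * (s ^ 4 * (q₁ * q₃ + q₂ ^ 2) ^ 2 * g) := by
    linear_combination ((-1) * g * s ^ 8 * q₁ * q₂ ^ 2 * q₃ + 2 * g * s ^ 8 * t * q₂ ^ 3 * q₃ + 3 * g * s ^ 8 * t ^ 2 * q₂ ^ 2 * q₃ ^ 2 + g * s ^ 8 * t ^ 2 * q₁ * q₃ ^ 3 + 2 * g * s ^ 8 * t ^ 3 * q₂ * q₃ ^ 3 + g * s ^ 8 * t ^ 4 * q₃ ^ 4) * h2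
  have hden2 : q₃ ^ 4 * (s ^ 4 * g + t ^ 4) ^ 2 + q₁ ^ 4
      = (q₃ ^ 2 * (s ^ 4 * g + t ^ 4) + q₁ ^ 2) ^ 2 := by
    linear_combination ((-1) * t ^ 4 * q₁ ^ 2 * q₃ ^ 2 + (-1) * g * s ^ 4 * q₁ ^ 2 * q₃ ^ 2) * h2
  have hnum2 : (q₁ ^ 2 * q₃ ^ 2 + q₂ ^ 4) * (s ^ 4 * g + t ^ 4)
      = (q₁ * q₃ + q₂ ^ 2) ^ 2 * (s ^ 4 * g + t ^ 4) := by
    linear_combination ((-1) * t ^ 4 * q₁ * q₂ ^ 2 * q₃ + (-1) * g * s ^ 4 * q₁ * q₂ ^ 2 * q₃) * h2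
  have e1 : aOf g (s * (q₁ + q₃ * t ^ 2)) (s ^ 2 * (q₂ + q₃ * t)) (s ^ 3 * q₃)
      = (s ^ 4 * (q₁ * q₃ + q₂ ^ 2) ^ 2 * g) / (q₃ ^ 2 * (s ^ 4 * g + t ^ 4) + q₁ ^ 2) ^ 2 := by
    unfold aOf
    rw [hnum1, hden1, mul_div_mul_left _ _ (pow_ne_zero 4 hs)]
  have e2 : aOf (s ^ 4 * g + t ^ 4) q₁ q₂ q₃
      = ((q₁ * q₃ + q₂ ^ 2) ^ 2 * (s ^ 4 * g + t ^ 4))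
        / (q₃ ^ 2 * (s ^ 4 * g + t ^ 4) + q₁ ^ 2) ^ 2 := by
    unfold aOf
    rw [hnum2, hden2]
  rw [e1, e2, ← add_div, div_pow]
  congr 1
  linear_combination (-(g * s ^ 4 * q₂ ^ 4) - 2 * g * s ^ 4 * q₁ * q₂ ^ 2 * q₃ - g * s ^ 4 * q₁ ^ 2 * q₃ ^ 2) * h2
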